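/- Let Ω ⊂ ℝⁿ be a bounded domain and let u ∈ C(Ω̄). Let η ∈ L¹(ℝⁿ) be a non-negative Borel function with compact support contained in B_R(0) and ∫_{ℝⁿ} η dμ = 1, and let g : ℝⁿ → [0,∞) be measurable with 2 g(z) ≤ η(w) whenever |w − z| ≤ 1, and κ := ∫_{ℝⁿ} g dμ > 0. Suppose there exist ε₀ > 0, C₁ > 0, C₂ > 0, α ∈ (0,1) such that: (1) |u(x) − u(y)| ≤ C₁|x − y|^α for all x ∈ Ω, y ∈ ∂Ω; (2) for every ε ∈ (0, ε₀), |u_ε(x) − u(x)| ≤ C₂ ε^α for all x ∈ Ω_{Rε}. Then for every r ∈ (0, ε₀), the modulus of continuity ω of u satisfies ω(r) ≤ max{ 2C₁(R+2)^α r^α , 2C₂ r^α + κ ω(2r) + (1 − 2κ) ω(r) }. -/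

import Mathlib

open MeasureTheory Metric


lemma key_inner {n : ℕ} {Ω : Set (EuclideanSpace ℝ (Fin n))}
    (U : EuclideanSpace ℝ (Fin n) → ℝ) (hU : Continuous U)
    (M : ℝ) (hUb : ∀ x, |U x| ≤ M)
    {R : ℝ} (hR : 0 < R)
    (η : EuclideanSpace ℝ (Fin n) → ℝ)
    (hηm : Measurable η) (hηnn : ∀ x, 0 ≤ η x) (hηint : Integrable η)
    (hηsupp : Function.support η ⊆ ball 0 R) (hη1 : (∫ x, η x) = 1)
    (g : EuclideanSpace ℝ (Fin n) → ℝ)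
    (hgm : Measurable g) (hgnn : ∀ z, 0 ≤ g z)
    (hgη : ∀ z w, ‖w - z‖ ≤ 1 → 2 * g z ≤ η w)
    {κ : ℝ} (hκ : κ = ∫ z, g z)
    {r : ℝ} (hr : 0 < r)
    {ω1 ω2 : ℝ}
    (hω1 : ∀ p ∈ Ω, ∀ q ∈ Ω, ‖p - q‖ ≤ r → U p - U q ≤ ω1)
    (hω2 : ∀ p ∈ Ω, ∀ q ∈ Ω, ‖p - q‖ ≤ 2 * r → U p - U q ≤ ω2)
    {a b : EuclideanSpace ℝ (Fin n)}
    (hain : ∀ z, dist z a ≤ (R + 1) * r → z ∈ Ω)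
    (hbin : ∀ z, dist z b ≤ (R + 1) * r → z ∈ Ω)
    (hab : ‖a - b‖ ≤ r) :
    (∫ y, (r ^ n)⁻¹ * η (r⁻¹ • y) * U (a - y))
      - (∫ y, (r ^ n)⁻¹ * η (r⁻¹ • y) * U (b - y))
      ≤ (1 - 2 * κ) * ω1 + κ * ω2 := by
  have hrn : (0:ℝ) < r ^ n := pow_pos hr n
  set c : EuclideanSpace ℝ (Fin n) := a - b with hc
  set φ : EuclideanSpace ℝ (Fin n) → ℝ := fun y => (r ^ n)⁻¹ * η (r⁻¹ • y) with hφ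
  set γ : EuclideanSpace ℝ (Fin n) → ℝ := fun y => (r ^ n)⁻¹ * g (r⁻¹ • y) with hγ
  have hφnn : ∀ y, 0 ≤ φ y := fun y => mul_nonneg (inv_nonneg.2 hrn.le) (hηnn _)
  have hγnn : ∀ y, 0 ≤ γ y := fun y => mul_nonneg (inv_nonneg.2 hrn.le) (hgnn _)
  -- kernel inequality at scale r
  have h2γ : ∀ z w : EuclideanSpace ℝ (Fin n), ‖w - z‖ ≤ r → 2 * γ z ≤ φ w := by
    intro z w h
    have h1 : ‖r⁻¹ • w - r⁻¹ • z‖ ≤ 1 := by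
      rw [← smul_sub, norm_smul, norm_inv, Real.norm_eq_abs, abs_of_pos hr,
        inv_mul_le_iff₀ hr, mul_one]
      exact h
    have h2 := hgη (r⁻¹ • z) (r⁻¹ • w) h1
    simp only [hφ, hγ]
    calc 2 * ((r ^ n)⁻¹ * g (r⁻¹ • z)) = (r ^ n)⁻¹ * (2 * g (r⁻¹ • z)) := by ring
      _ ≤ (r ^ n)⁻¹ * η (r⁻¹ • w) := by
          exact mul_le_mul_of_nonneg_left h2 (inv_nonneg.2 hrn.le)
  have hγφ : ∀ y, 2 * γ y ≤ φ y := fun y => h2γ y y (by simp [hr.le])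
  have hcancel : ∀ y : EuclideanSpace ℝ (Fin n), ‖y - (y - c)‖ ≤ r := by
    intro y; rw [sub_sub_cancel]; exact hab
  -- support bounds
  have hφsupp : ∀ y, φ y ≠ 0 → ‖y‖ ≤ R * r := by
    intro y hy
    have hη0 : η (r⁻¹ • y) ≠ 0 := by
      intro h0; apply hy; simp [hφ, h0]
    have := hηsupp hη0
    rw [mem_ball_zero_iff, norm_smul, norm_inv, Real.norm_eq_abs, abs_of_pos hr] at this
    have : ‖y‖ < r * R := by
      rwa [inv_mul_lt_iff₀ hr] at this
    linarith [this, mul_comm r R ▸ this]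
  have hγsupp : ∀ y, γ y ≠ 0 → ‖y‖ ≤ R * r := by
    intro y hy
    apply hφsupp
    have h1 : 0 < γ y := lt_of_le_of_ne (hγnn y) (Ne.symm hy)
    have := hγφ y
    intro h0; rw [h0] at this; linarith
  -- memberships
  have hRr : R * r ≤ (R + 1) * r := by nlinarith
  have hmem_a : ∀ y : EuclideanSpace ℝ (Fin n), ‖y‖ ≤ R * r → a - y ∈ Ω := by
    intro y hy; apply hain
    rw [dist_eq_norm]
    have : a - y - a = -y := by abel
    rw [this, norm_neg]; exact hy.trans hRr
  have hmem_b : ∀ y : EuclideanSpace ℝ (Fin n), ‖y‖ ≤ R * r → b - y ∈ Ω := by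
    intro y hy; apply hbin
    rw [dist_eq_norm]
    have : b - y - b = -y := by abel
    rw [this, norm_neg]; exact hy.trans hRr
  have hmem_bc : ∀ y : EuclideanSpace ℝ (Fin n), ‖y‖ ≤ R * r → b - c - y ∈ Ω := by
    intro y hy; apply hbin
    rw [dist_eq_norm]
    have : b - c - y - b = -(c + y) := by abel
    rw [this, norm_neg]
    calc ‖c + y‖ ≤ ‖c‖ + ‖y‖ := norm_add_le _ _
      _ ≤ r + R * r := add_le_add hab hy
      _ = (R + 1) * r := by ring
  -- measurability and integrability
  have hsmul : Measurable fun y : EuclideanSpace ℝ (Fin n) => r⁻¹ • y :=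
    measurable_id.const_smul r⁻¹
  have hφm : Measurable φ := (hηm.comp hsmul).const_mul _
  have hγm : Measurable γ := (hgm.comp hsmul).const_mul _
  have hφint : Integrable φ := (hηint.comp_smul (inv_ne_zero hr.ne')).const_mul _
  have hgint : Integrable g := by
    refine hηint.mono' hgm.aestronglyMeasurable (Filter.Eventually.of_forall fun z => ?_)
    rw [Real.norm_eq_abs, abs_of_nonneg (hgnn z)]
    have := hgη z z (by simp)
    linarith [hgnn z]
  have hγint : Integrable γ := (hgint.comp_smul (inv_ne_zero hr.ne')).const_mul _
  have hγcint : Integrable (fun y => γ (y - c)) := hγint.comp_sub_right c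
  have hγcm : Measurable (fun y : EuclideanSpace ℝ (Fin n) => γ (y - c)) :=
    hγm.comp (measurable_id.sub_const c)
  -- integral values
  have hfinrank : Module.finrank ℝ (EuclideanSpace ℝ (Fin n)) = n := finrank_euclideanSpace_fin
  have hφ1 : ∫ y, φ y = 1 := by
    simp only [hφ]
    rw [integral_const_mul, Measure.integral_comp_inv_smul_of_nonneg volume η hr.le,
      hfinrank, smul_eq_mul, hη1, mul_one, inv_mul_cancel₀ hrn.ne']
  have hγκ : ∫ y, γ y = κ := by
    simp only [hγ]
    rw [integral_const_mul, Measure.integral_comp_inv_smul_of_nonneg volume g hr.le,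
      hfinrank, smul_eq_mul, ← hκ, ← mul_assoc, inv_mul_cancel₀ hrn.ne', one_mul]
  have hγcκ : ∫ y, γ (y - c) = κ := by
    rw [integral_sub_right_eq_self γ c]; exact hγκ
  -- product integrability
  have hMnn : 0 ≤ M := (abs_nonneg _).trans (hUb 0)
  have hprod : ∀ ψ : EuclideanSpace ℝ (Fin n) → ℝ, Measurable ψ → Integrable ψ →
      (∀ y, 0 ≤ ψ y) → ∀ x : EuclideanSpace ℝ (Fin n),
      Integrable (fun y => ψ y * U (x - y)) := by
    intro ψ hm hint hnn x
    refine (hint.const_mul M).mono'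
      (hm.aestronglyMeasurable.mul
        ((hU.measurable.comp (measurable_const.sub measurable_id)).aestronglyMeasurable))
      (Filter.Eventually.of_forall fun y => ?_)
    rw [Real.norm_eq_abs, abs_mul, abs_of_nonneg (hnn y)]
    calc ψ y * |U (x - y)| ≤ ψ y * M := mul_le_mul_of_nonneg_left (hUb _) (hnn y)
      _ = M * ψ y := mul_comm _ _
  set v : EuclideanSpace ℝ (Fin n) → ℝ := fun y => U (a - y) - U (b - y) with hv
  have hφva : Integrable (fun y => φ y * U (a - y)) := hprod φ hφm hφint hφnn a
  have hφvb : Integrable (fun y => φ y * U (b - y)) := hprod φ hφm hφint hφnn b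
  have hφv : Integrable (fun y => φ y * v y) := by
    have := hφva.sub hφvb
    simpa [hv, mul_sub, Pi.sub_def] using this
  have hγv : Integrable (fun y => γ y * v y) := by
    have := (hprod γ hγm hγint hγnn a).sub (hprod γ hγm hγint hγnn b)
    simpa [hv, mul_sub, Pi.sub_def] using this
  have hγcv : Integrable (fun y => γ (y - c) * v y) := by
    have := (hprod _ hγcm hγcint (fun y => hγnn _) a).sub
      (hprod _ hγcm hγcint (fun y => hγnn _) b)
    simpa [hv, mul_sub, Pi.sub_def] using this
  have hrest : Integrable (fun y => (φ y - γ y - γ (y - c)) * v y) := by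
    have := (hφv.sub hγv).sub hγcv
    simpa [sub_mul, Pi.sub_def] using this
  -- step 1 : rewrite the difference as a single integral
  have step1 : (∫ y, φ y * U (a - y)) - (∫ y, φ y * U (b - y)) = ∫ y, φ y * v y := by
    rw [← integral_sub hφva hφvb]
    congr 1; funext y; simp [hv, mul_sub]
  -- step 2 : decompose
  have step2 : (∫ y, φ y * v y)
      = (∫ y, (φ y - γ y - γ (y - c)) * v y)
        + ((∫ y, γ y * v y) + (∫ y, γ (y - c) * v y)) := by
    have hsum : Integrable (fun y => γ y * v y + γ (y - c) * v y) := hγv.add hγcv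
    have e : (fun y => φ y * v y)
        = fun y => (φ y - γ y - γ (y - c)) * v y + (γ y * v y + γ (y - c) * v y) := by
      funext y; ring
    rw [e, integral_add hrest hsum, integral_add hγv hγcv]
  -- step 3 : bound the first piece
  have step3 : (∫ y, (φ y - γ y - γ (y - c)) * v y) ≤ (1 - 2 * κ) * ω1 := by
    have hle : ∀ y, (φ y - γ y - γ (y - c)) * v y ≤ (φ y - γ y - γ (y - c)) * ω1 := by
      intro y
      by_cases hy : φ y = 0
      · have h1 : γ y = 0 := le_antisymm (by have := hγφ y; rw [hy] at this; linarith) (hγnn y)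
        have h2 : γ (y - c) = 0 := le_antisymm
          (by have := h2γ (y - c) y (hcancel y); rw [hy] at this; linarith) (hγnn _)
        simp [hy, h1, h2]
      · have hy' := hφsupp y hy
        have hcoeff : 0 ≤ φ y - γ y - γ (y - c) := by
          have h1 := hγφ y
          have h2 := h2γ (y - c) y (hcancel y)
          linarith
        have hvy : v y ≤ ω1 := by
          apply hω1 _ (hmem_a y hy') _ (hmem_b y hy')
          have : a - y - (b - y) = a - b := by abel
          rw [this]; exact hab
        exact mul_le_mul_of_nonneg_left hvy hcoeff
    have hd1 : Integrable (fun y => φ y - γ y) := hφint.sub hγint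
    have hd2 : Integrable (fun y => φ y - γ y - γ (y - c)) := hd1.sub hγcint
    have := integral_mono hrest (hd2.mul_const ω1) hle
    refine this.trans (le_of_eq ?_)
    rw [integral_mul_const, integral_sub hd1 hγcint, integral_sub hφint hγint,
      hφ1, hγκ, hγcκ]
    ring
  -- step 4 : bound the second piece
  have shift : (∫ y, γ (y - c) * v y) = ∫ y, γ y * v (y + c) := by
    rw [← integral_add_right_eq_self (fun y => γ (y - c) * v y) c]
    congr 1; funext y
    simp [add_sub_cancel_right]
  have hγv' : Integrable (fun y => γ y * v (y + c)) := by
    have h1 := (hprod γ hγm hγint hγnn b).sub (hprod γ hγm hγint hγnn (b - c))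
    have he1 : ∀ y : EuclideanSpace ℝ (Fin n), a - (y + c) = b - y := by
      intro y; rw [hc]; abel
    have he2 : ∀ y : EuclideanSpace ℝ (Fin n), b - (y + c) = b - c - y := by
      intro y; abel
    refine (integrable_congr (Filter.Eventually.of_forall fun y => ?_)).2 h1
    simp only [hv, he1, he2, mul_sub, Pi.sub_apply]
  have step4 : (∫ y, γ y * v y) + (∫ y, γ (y - c) * v y) ≤ κ * ω2 := by
    rw [shift, ← integral_add hγv hγv']
    have hle : ∀ y, γ y * v y + γ y * v (y + c) ≤ γ y * ω2 := by
      intro y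
      by_cases hy : γ y = 0
      · simp [hy]
      · have hy' := hγsupp y hy
        have he1 : a - (y + c) = b - y := by rw [hc]; abel
        have he2 : b - (y + c) = b - c - y := by abel
        have hsum : v y + v (y + c) = U (a - y) - U (b - c - y) := by
          simp only [hv, he1, he2]; ring
        have hdiff : U (a - y) - U (b - c - y) ≤ ω2 := by
          apply hω2 _ (hmem_a y hy') _ (hmem_bc y hy')
          have : a - y - (b - c - y) = c + c := by rw [hc]; abel
          rw [this]
          calc ‖c + c‖ ≤ ‖c‖ + ‖c‖ := norm_add_le _ _
            _ ≤ 2 * r := by linarith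
        calc γ y * v y + γ y * v (y + c) = γ y * (v y + v (y + c)) := by ring
          _ = γ y * (U (a - y) - U (b - c - y)) := by rw [hsum]
          _ ≤ γ y * ω2 := mul_le_mul_of_nonneg_left hdiff (hγnn y)
    have h2 : (∫ y, γ y * v y + γ y * v (y + c)) ≤ ∫ y, γ y * ω2 :=
      integral_mono (hγv.add hγv') (hγint.mul_const ω2) hle
    refine h2.trans (le_of_eq ?_)
    rw [integral_mul_const, hγκ]
  calc (∫ y, (r ^ n)⁻¹ * η (r⁻¹ • y) * U (a - y))
        - (∫ y, (r ^ n)⁻¹ * η (r⁻¹ • y) * U (b - y))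
      = (∫ y, φ y * U (a - y)) - (∫ y, φ y * U (b - y)) := rfl
    _ = ∫ y, φ y * v y := step1
    _ = _ := step2
    _ ≤ (1 - 2 * κ) * ω1 + κ * ω2 := add_le_add step3 step4

/-- The functional inequality for the modulus of continuity: under the
boundary Hölder estimate and the kernel-regularization estimate, for every `r ∈ (0, ε₀)`,
`ω(r) ≤ max { 2C₁(R+2)^α r^α , 2C₂ r^α + κ ω(2r) + (1 - 2κ) ω(r) }`. -/
theorem stmt_3
    (n : ℕ) (Ω : Set (EuclideanSpace ℝ (Fin n)))
    (hΩo : IsOpen Ω) (hΩb : Bornology.IsBounded Ω) (hΩc : IsConnected Ω)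
    (u : EuclideanSpace ℝ (Fin n) → ℝ) (hu : ContinuousOn u (closure Ω))
    (R : ℝ) (hR : 0 < R)
    (η : EuclideanSpace ℝ (Fin n) → ℝ)
    (hηm : Measurable η) (hηnn : ∀ x, 0 ≤ η x)
    (hηint : Integrable η)
    (hηsupp : Function.support η ⊆ ball 0 R)
    (hη1 : (∫ x, η x) = 1)
    (g : EuclideanSpace ℝ (Fin n) → ℝ)
    (hgm : Measurable g) (hgnn : ∀ z, 0 ≤ g z)
    (hgη : ∀ z w, ‖w - z‖ ≤ 1 → 2 * g z ≤ η w)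
    (κ : ℝ) (hκ : κ = ∫ z, g z) (hκ0 : 0 < κ)
    (ω : ℝ → ℝ)
    (hω : ∀ s : ℝ, ω s = sSup {t : ℝ | ∃ a ∈ Ω, ∃ b ∈ Ω, ‖a - b‖ ≤ s ∧ t = |u a - u b|})
    (ε₀ C₁ C₂ α : ℝ) (hε₀ : 0 < ε₀) (hC₁ : 0 < C₁) (hC₂ : 0 < C₂)
    (hα : α ∈ Set.Ioo (0:ℝ) 1)
    (hbdry : ∀ x ∈ Ω, ∀ y ∈ frontier Ω, |u x - u y| ≤ C₁ * ‖x - y‖ ^ α)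
    (hreg : ∀ ε : ℝ, 0 < ε → ε < ε₀ → ∀ x ∈ Ω, R * ε < infDist x (frontier Ω) →
      |(∫ y, (ε ^ n)⁻¹ * η (ε⁻¹ • y) * u (x - y)) - u x| ≤ C₂ * ε ^ α) :
    ∀ r : ℝ, 0 < r → r < ε₀ →
      ω r ≤ max (2 * C₁ * (R + 2) ^ α * r ^ α)
        (2 * C₂ * r ^ α + κ * ω (2 * r) + (1 - 2 * κ) * ω r) := by
  intro r hr hrε
  obtain ⟨hα0, hα1⟩ := hα
  have hclos : IsCompact (closure Ω) := hΩb.isCompact_closure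
  obtain ⟨M₀, hM₀⟩ := hclos.exists_bound_of_continuousOn hu
  set M : ℝ := max M₀ 0 with hM
  have hMnn : 0 ≤ M := le_max_right _ _
  have huM : ∀ x ∈ closure Ω, |u x| ≤ M := fun x hx => (hM₀ x hx).trans (le_max_left _ _)
  -- bounded continuous extension of `u`
  obtain ⟨G, hG⟩ := ContinuousMap.exists_restrict_eq (isClosed_closure (s := Ω))
    ⟨(closure Ω).restrict u, hu.restrict⟩
  have hGeq : ∀ x ∈ closure Ω, G x = u x := fun x hx =>
    DFunLike.congr_fun hG (⟨x, hx⟩ : closure Ω)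
  set U : EuclideanSpace ℝ (Fin n) → ℝ := fun x => max (-M) (min M (G x)) with hUdef
  have hUcont : Continuous U := continuous_const.max (continuous_const.min G.continuous)
  have hUb : ∀ x, |U x| ≤ M := by
    intro x
    refine abs_le.2 ⟨le_max_left _ _, max_le (by linarith) (min_le_left _ _)⟩
  have hUeq : ∀ x ∈ closure Ω, U x = u x := by
    intro x hx
    have h1 := abs_le.1 (huM x hx)
    show max (-M) (min M (G x)) = u x
    rw [hGeq x hx, min_eq_right h1.2, max_eq_right h1.1]
  -- basic facts about ω
  have hbdd : ∀ s : ℝ, BddAbove {t : ℝ | ∃ a ∈ Ω, ∃ b ∈ Ω, ‖a - b‖ ≤ s ∧ t = |u a - u b|} := by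
    intro s
    refine ⟨2 * M, ?_⟩
    rintro t ⟨p, hp, q, hq, -, rfl⟩
    have h1 := huM p (subset_closure hp)
    have h2 := huM q (subset_closure hq)
    have h3 : |u p - u q| ≤ |u p| + |u q| := by
      simpa [sub_eq_add_neg] using abs_add_le (u p) (-u q)
    linarith
  have hωle : ∀ s : ℝ, ∀ p ∈ Ω, ∀ q ∈ Ω, ‖p - q‖ ≤ s → u p - u q ≤ ω s := by
    intro s p hp q hq h
    rw [hω s]
    exact (le_abs_self _).trans (le_csSup (hbdd s) ⟨p, hp, q, hq, h, rfl⟩)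
  have harm1 : 0 < 2 * C₁ * (R + 2) ^ α * r ^ α := by positivity
  have hmax0 : (0:ℝ) ≤ max (2 * C₁ * (R + 2) ^ α * r ^ α)
      (2 * C₂ * r ^ α + κ * ω (2 * r) + (1 - 2 * κ) * ω r) :=
    harm1.le.trans (le_max_left _ _)
  conv_lhs => rw [hω r]
  refine Real.sSup_le ?_ hmax0
  rintro t ⟨p, hp, q, hq, hpq, rfl⟩
  by_cases hpq0 : p = q
  · subst hpq0; simpa using hmax0
  haveI : Nontrivial (EuclideanSpace ℝ (Fin n)) := nontrivial_of_ne p q hpq0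
  have hΩuniv : Ω ≠ Set.univ := by
    intro h
    exact NormedSpace.unbounded_univ ℝ (EuclideanSpace ℝ (Fin n)) (h ▸ hΩb)
  have hstep : (R + 1) * r ≤ (R + 2) * r := by nlinarith
  by_cases hnear : infDist p (frontier Ω) ≤ (R + 1) * r ∨ infDist q (frontier Ω) ≤ (R + 1) * r
  · -- boundary case
    have hfne : (frontier Ω).Nonempty := nonempty_frontier_iff.2 ⟨hΩc.nonempty, hΩuniv⟩
    have hfc : IsCompact (frontier Ω) :=
      hclos.of_isClosed_subset isClosed_frontier frontier_subset_closure
    have key1 : ∀ x ∈ Ω, ∀ y ∈ Ω, ‖x - y‖ ≤ r → infDist x (frontier Ω) ≤ (R + 1) * r →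
        |u x - u y| ≤ 2 * C₁ * (R + 2) ^ α * r ^ α := by
      intro x hx y hy hxy hxd
      obtain ⟨z, hzf, hzd⟩ := hfc.exists_infDist_eq_dist hfne x
      have hz1 : ‖x - z‖ ≤ (R + 2) * r := by
        rw [← dist_eq_norm, ← hzd]; linarith
      have hz2 : ‖y - z‖ ≤ (R + 2) * r := by
        have he : y - z = (y - x) + (x - z) := by abel
        have h4 : ‖x - z‖ ≤ (R + 1) * r := by rw [← dist_eq_norm, ← hzd]; exact hxd
        calc ‖y - z‖ ≤ ‖y - x‖ + ‖x - z‖ := by rw [he]; exact norm_add_le _ _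
          _ ≤ r + (R + 1) * r := by
              rw [norm_sub_rev]; exact add_le_add hxy h4
          _ = (R + 2) * r := by ring
      have hb1 := hbdry x hx z hzf
      have hb2 := hbdry y hy z hzf
      have hR2r : (0:ℝ) ≤ R + 2 := by linarith
      have hmul : ((R + 2) * r) ^ α = (R + 2) ^ α * r ^ α := Real.mul_rpow hR2r hr.le
      have hr1 : ‖x - z‖ ^ α ≤ (R + 2) ^ α * r ^ α := by
        rw [← hmul]; exact Real.rpow_le_rpow (norm_nonneg _) hz1 hα0.le
      have hr2 : ‖y - z‖ ^ α ≤ (R + 2) ^ α * r ^ α := by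
        rw [← hmul]; exact Real.rpow_le_rpow (norm_nonneg _) hz2 hα0.le
      have hm1 : C₁ * ‖x - z‖ ^ α ≤ C₁ * ((R + 2) ^ α * r ^ α) :=
        mul_le_mul_of_nonneg_left hr1 hC₁.le
      have hm2 : C₁ * ‖y - z‖ ^ α ≤ C₁ * ((R + 2) ^ α * r ^ α) :=
        mul_le_mul_of_nonneg_left hr2 hC₁.le
      have htri : |u x - u y| ≤ |u x - u z| + |u y - u z| := by
        have h7 := abs_sub_le (u x) (u z) (u y)
        rwa [abs_sub_comm (u z) (u y)] at h7
      linarith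
    rcases hnear with h | h
    · exact (key1 p hp q hq hpq h).trans (le_max_left _ _)
    · have h5 := key1 q hq p hp (by rwa [norm_sub_rev]) h
      rw [abs_sub_comm] at h5
      exact h5.trans (le_max_left _ _)
  · -- interior case
    push_neg at hnear
    obtain ⟨hdp, hdq⟩ := hnear
    have hball : ∀ x ∈ Ω, (R + 1) * r < infDist x (frontier Ω) →
        ∀ z, dist z x ≤ (R + 1) * r → z ∈ Ω := by
      intro x hx hxd z hz
      by_contra hzΩ
      obtain ⟨w, hwf, hw⟩ := exists_mem_frontier_infDist_compl_eq_dist hx hΩuniv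
      have h1 : infDist x (frontier Ω) ≤ dist x w := infDist_le_dist_of_mem hwf
      have h2 : infDist x Ωᶜ ≤ dist x z := infDist_le_dist_of_mem hzΩ
      rw [dist_comm] at h2
      rw [← hw] at h1
      linarith
    have hinp := hball p hp hdp
    have hinq := hball q hq hdq
    have hint_eq : ∀ x, (∀ z, dist z x ≤ (R + 1) * r → z ∈ Ω) →
        (∫ y, (r ^ n)⁻¹ * η (r⁻¹ • y) * u (x - y))
          = ∫ y, (r ^ n)⁻¹ * η (r⁻¹ • y) * U (x - y) := by
      intro x hin
      congr 1; funext y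
      by_cases hy : η (r⁻¹ • y) = 0
      · simp [hy]
      · have hmem := hηsupp hy
        rw [mem_ball_zero_iff, norm_smul, norm_inv, Real.norm_eq_abs, abs_of_pos hr] at hmem
        have hyn : ‖y‖ ≤ (R + 1) * r := by
          have h6 : ‖y‖ < r * R := by rwa [inv_mul_lt_iff₀ hr] at hmem
          nlinarith
        have hxy : x - y ∈ Ω := by
          apply hin
          rw [dist_eq_norm]
          have he : x - y - x = -y := by abel
          rw [he, norm_neg]; exact hyn
        rw [hUeq _ (subset_closure hxy)]
    have hRrp : R * r < infDist p (frontier Ω) := lt_trans (by nlinarith) hdp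
    have hRrq : R * r < infDist q (frontier Ω) := lt_trans (by nlinarith) hdq
    have h1 := hreg r hr hrε p hp hRrp
    have h2 := hreg r hr hrε q hq hRrq
    rw [hint_eq p hinp] at h1
    rw [hint_eq q hinq] at h2
    have hω1U : ∀ x ∈ Ω, ∀ y ∈ Ω, ‖x - y‖ ≤ r → U x - U y ≤ ω r := by
      intro x hx y hy h
      rw [hUeq x (subset_closure hx), hUeq y (subset_closure hy)]
      exact hωle r x hx y hy h
    have hω2U : ∀ x ∈ Ω, ∀ y ∈ Ω, ‖x - y‖ ≤ 2 * r → U x - U y ≤ ω (2 * r) := by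
      intro x hx y hy h
      rw [hUeq x (subset_closure hx), hUeq y (subset_closure hy)]
      exact hωle (2 * r) x hx y hy h
    have hK1 := key_inner U hUcont M hUb hR η hηm hηnn hηint hηsupp hη1 g hgm hgnn hgη
      hκ hr hω1U hω2U hinp hinq hpq
    have hK2 := key_inner U hUcont M hUb hR η hηm hηnn hηint hηsupp hη1 g hgm hgnn hgη
      hκ hr hω1U hω2U hinq hinp (by rwa [norm_sub_rev])
    have habs1 := abs_le.1 h1
    have habs2 := abs_le.1 h2
    refine le_trans ?_ (le_max_right _ _)
    refine abs_le.2 ⟨?_, ?_⟩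
    · linarith [habs1.1, habs1.2, habs2.1, habs2.2, hK1, hK2]
    · linarith [habs1.1, habs1.2, habs2.1, habs2.2, hK1, hK2]
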